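/- For every integer k ≥ 2, the connected trivially perfect graph G = K_2 ∨ (H + H + ⋯ + H) (the join of K_2 with the disjoint union of k copies of H), where H = K_3 ∨ (K_2 + K_2), has 7k + 2 vertices and its distance matrix has nullity exactly k. -/

import Mathlib

open SimpleGraph

/-- The distance matrix of a finite simple graph, over ℚ: the `(u,v)` entry is the
graph distance between `u` and `v`. -/
noncomputable def distMatrix {V : Type*} [Fintype V] (G : SimpleGraph V) : Matrix V V ℚ :=
  fun u v => (G.dist u v : ℚ)

/-- Disjoint union of two simple graphs. -/
def gUnion {α β : Type*} (G : SimpleGraph α) (H : SimpleGraph β) : SimpleGraph (α ⊕ β) where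
  Adj x y :=
    match x, y with
    | Sum.inl a, Sum.inl b => G.Adj a b
    | Sum.inr a, Sum.inr b => H.Adj a b
    | _, _ => False
  symm := by
    constructor
    rintro (a | a) (b | b) h
    · exact h.symm
    · exact h.elim
    · exact h.elim
    · exact h.symm
  loopless := by
    constructor
    rintro (a | a) h
    · exact G.loopless.irrefl a h
    · exact H.loopless.irrefl a h

/-- Join of two simple graphs: their disjoint union together with all edges between them. -/
def gJoin {α β : Type*} (G : SimpleGraph α) (H : SimpleGraph β) : SimpleGraph (α ⊕ β) where
  Adj x y :=
    match x, y with
    | Sum.inl a, Sum.inl b => G.Adj a b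
    | Sum.inr a, Sum.inr b => H.Adj a b
    | Sum.inl _, Sum.inr _ => True
    | Sum.inr _, Sum.inl _ => True
  symm := by
    constructor
    rintro (a | a) (b | b) h
    · exact h.symm
    · trivial
    · trivial
    · exact h.symm
  loopless := by
    constructor
    rintro (a | a) h
    · exact G.loopless.irrefl a h
    · exact H.loopless.irrefl a h

/-- The disjoint union of k copies of a simple graph H. -/
def copies (k : ℕ) {α : Type*} (H : SimpleGraph α) : SimpleGraph (Fin k × α) where
  Adj x y := x.1 = y.1 ∧ H.Adj x.2 y.2
  symm := by
    constructor
    rintro x y ⟨h1, h2⟩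
    exact ⟨h1.symm, h2.symm⟩
  loopless := by
    constructor
    rintro x ⟨h1, h2⟩
    exact H.loopless.irrefl _ h2

/-- The graph H = K₃ ∨ (K₂ + K₂). -/
def Hgraph : SimpleGraph (Fin 3 ⊕ (Fin 2 ⊕ Fin 2)) :=
  gJoin (⊤ : SimpleGraph (Fin 3))
    (gUnion (⊤ : SimpleGraph (Fin 2)) (⊤ : SimpleGraph (Fin 2)))

section Aux
open scoped Classical

open Sum

variable {k : ℕ}

abbrev Wt : Type := Fin 3 ⊕ (Fin 2 ⊕ Fin 2)

abbrev Vt (k : ℕ) : Type := Fin 2 ⊕ (Fin k × Wt)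

abbrev Gk (k : ℕ) : SimpleGraph (Vt k) := gJoin (⊤ : SimpleGraph (Fin 2)) (copies k Hgraph)

lemma adj_inr_iff {i j : Fin k} {x y : Wt} :
    (Gk k).Adj (inr (i, x)) (inr (j, y)) ↔ i = j ∧ Hgraph.Adj x y := Iff.rfl

lemma adj_inl_inr {a : Fin 2} {p : Fin k × Wt} : (Gk k).Adj (inl a) (inr p) := trivial

lemma adj_inr_inl {a : Fin 2} {p : Fin k × Wt} : (Gk k).Adj (inr p) (inl a) := trivial

lemma adj_inl_inl {a b : Fin 2} : (Gk k).Adj (inl a) (inl b) ↔ a ≠ b := Iff.rfl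

lemma H_adj_inl_left {a : Fin 3} {y : Wt} (h : inl a ≠ y) : Hgraph.Adj (inl a) y := by
  cases y with
  | inl b =>
      have : a ≠ b := fun he => h (by rw [he])
      exact this
  | inr b => trivial

lemma H_adj_inl_right {a : Fin 3} {y : Wt} (h : y ≠ inl a) : Hgraph.Adj y (inl a) := by
  cases y with
  | inl b =>
      have : b ≠ a := fun he => h (by rw [he])
      exact this
  | inr b => trivial

lemma H_adj_inr_iff {x y : Fin 2 ⊕ Fin 2} :
    Hgraph.Adj (inr x) (inr y) ↔
      (gUnion (⊤ : SimpleGraph (Fin 2)) (⊤ : SimpleGraph (Fin 2))).Adj x y := Iff.rfl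

lemma adj_of_ne_inl {a : Fin 2} {v : Vt k} (h : inl a ≠ v) : (Gk k).Adj (inl a) v := by
  cases v with
  | inl b => exact fun he => h (by rw [he])
  | inr p => trivial

/-- distance formula -/
lemma dist_eq (u v : Vt k) :
    (Gk k).dist u v = if u = v then 0 else if (Gk k).Adj u v then 1 else 2 := by
  classical
  by_cases h : u = v
  · simp [h]
  rw [if_neg h]
  by_cases ha : (Gk k).Adj u v
  · rw [if_pos ha, SimpleGraph.dist_eq_one_iff_adj]
    exact ha
  · rw [if_neg ha]
    -- both u v are inr
    obtain ⟨p, hp⟩ : ∃ p, u = inr p := by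
      cases u with
      | inl a => exact absurd (adj_of_ne_inl h) ha
      | inr p => exact ⟨p, rfl⟩
    obtain ⟨q, hq⟩ : ∃ q, v = inr q := by
      cases v with
      | inl a => exact absurd ((adj_of_ne_inl (k := k) (fun he => h (by rw [he]))).symm) ha
      | inr q => exact ⟨q, rfl⟩
    subst hp hq
    have h2 : (Gk k).dist (inr p) (inr q) ≤ 2 := by
      have := SimpleGraph.dist_le
        (SimpleGraph.Walk.cons (adj_inr_inl (a := 0) (p := p))
          (SimpleGraph.Walk.cons (adj_inl_inr (p := q)) SimpleGraph.Walk.nil))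
      simpa using this
    have h0 : (Gk k).dist (inr p) (inr q) ≠ 0 := by
      intro h0
      have hr : (Gk k).Reachable (inr p) (inr q) :=
        (SimpleGraph.Walk.cons (adj_inr_inl (a := 0) (p := p))
          (SimpleGraph.Walk.cons (adj_inl_inr (p := q)) SimpleGraph.Walk.nil)).reachable
      exact h ((hr.dist_eq_zero_iff).mp h0)
    have h1 : (Gk k).dist (inr p) (inr q) ≠ 1 := by
      intro h1
      exact ha (SimpleGraph.dist_eq_one_iff_adj.mp h1)
    omega

end Aux
section Aux2
open Sum
open scoped Classical
variable {k : ℕ}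

lemma Gk_connected : (Gk k).Connected := by
  rw [SimpleGraph.connected_iff]
  have key : ∀ v : Vt k, (Gk k).Reachable (inl 0) v := by
    intro v
    by_cases h : (inl 0 : Vt k) = v
    · rw [h]
    · exact (adj_of_ne_inl h).reachable
  exact ⟨fun u v => (key u).symm.trans (key v), ⟨inl 0⟩⟩

lemma no_induced_path (v0 v1 v2 v3 : Vt k)
    (h01 : (Gk k).Adj v0 v1) (h12 : (Gk k).Adj v1 v2) (h23 : (Gk k).Adj v2 v3)
    (h02 : ¬ (Gk k).Adj v0 v2) (h13 : ¬ (Gk k).Adj v1 v3)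
    (n02 : v0 ≠ v2) (n13 : v1 ≠ v3) : False := by
  -- v0 and v2 are both inr
  obtain ⟨i0, w0, rfl⟩ : ∃ i w, v0 = inr (i, w) := by
    cases v0 with
    | inl a => exact absurd (adj_of_ne_inl n02) h02
    | inr p => exact ⟨p.1, p.2, rfl⟩
  obtain ⟨i2, w2, rfl⟩ : ∃ i w, v2 = inr (i, w) := by
    cases v2 with
    | inl a => exact absurd ((adj_of_ne_inl (fun he => n02 he.symm)).symm) h02
    | inr p => exact ⟨p.1, p.2, rfl⟩
  obtain ⟨i1, w1, rfl⟩ : ∃ i w, v1 = inr (i, w) := by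
    cases v1 with
    | inl a => exact absurd (adj_of_ne_inl n13) h13
    | inr p => exact ⟨p.1, p.2, rfl⟩
  obtain ⟨i3, w3, rfl⟩ : ∃ i w, v3 = inr (i, w) := by
    cases v3 with
    | inl a => exact absurd ((adj_of_ne_inl (fun he => n13 he.symm)).symm) h13
    | inr p => exact ⟨p.1, p.2, rfl⟩
  obtain ⟨e01, a01⟩ := adj_inr_iff.mp h01
  obtain ⟨e12, a12⟩ := adj_inr_iff.mp h12
  obtain ⟨e23, a23⟩ := adj_inr_iff.mp h23
  subst e01; subst e12; subst e23
  have hw02 : ¬ Hgraph.Adj w0 w2 := fun ha => h02 (adj_inr_iff.mpr ⟨rfl, ha⟩)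
  have hw13 : ¬ Hgraph.Adj w1 w3 := fun ha => h13 (adj_inr_iff.mpr ⟨rfl, ha⟩)
  have nw02 : w0 ≠ w2 := fun he => n02 (by rw [he])
  have nw13 : w1 ≠ w3 := fun he => n13 (by rw [he])
  -- all w's are inr
  obtain ⟨x0, rfl⟩ : ∃ x, w0 = inr x := by
    cases w0 with
    | inl a => exact absurd (H_adj_inl_left nw02) hw02
    | inr x => exact ⟨x, rfl⟩
  obtain ⟨x2, rfl⟩ : ∃ x, w2 = inr x := by
    cases w2 with
    | inl a => exact absurd (H_adj_inl_right Sum.inr_ne_inl) hw02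
    | inr x => exact ⟨x, rfl⟩
  obtain ⟨x1, rfl⟩ : ∃ x, w1 = inr x := by
    cases w1 with
    | inl a => exact absurd (H_adj_inl_left nw13) hw13
    | inr x => exact ⟨x, rfl⟩
  -- now inside gUnion ⊤ ⊤
  have u01 : (gUnion (⊤ : SimpleGraph (Fin 2)) (⊤ : SimpleGraph (Fin 2))).Adj x0 x1 := a01
  have u12 : (gUnion (⊤ : SimpleGraph (Fin 2)) (⊤ : SimpleGraph (Fin 2))).Adj x1 x2 := a12
  have nu02 : x0 ≠ x2 := fun he => nw02 (by rw [he])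
  have hu02 : ¬ (gUnion (⊤ : SimpleGraph (Fin 2)) (⊤ : SimpleGraph (Fin 2))).Adj x0 x2 :=
    fun ha => hw02 ha
  cases x1 with
  | inl t =>
      cases x0 with
      | inl s =>
          cases x2 with
          | inl u =>
              have hsu : s = u := by
                by_contra hne
                exact hu02 hne
              exact nu02 (by rw [hsu])
          | inr u => exact u12
      | inr s => exact u01
  | inr t =>
      cases x0 with
      | inr s =>
          cases x2 with
          | inr u =>
              have hsu : s = u := by
                by_contra hne
                exact hu02 hne
              exact nu02 (by rw [hsu])
          | inl u => exact u12
      | inl s => exact u01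

lemma no_p4 : ¬ Nonempty (pathGraph 4 ↪g Gk k) := by
  rintro ⟨f⟩
  have adj : ∀ a b : Fin 4, (pathGraph 4).Adj a b → (Gk k).Adj (f a) (f b) :=
    fun a b h => f.map_adj_iff.mpr h
  have nadj : ∀ a b : Fin 4, ¬ (pathGraph 4).Adj a b → ¬ (Gk k).Adj (f a) (f b) :=
    fun a b h ha => h (f.map_adj_iff.mp ha)
  refine no_induced_path (f 0) (f 1) (f 2) (f 3) ?_ ?_ ?_ ?_ ?_ ?_ ?_
  · exact adj 0 1 (by rw [SimpleGraph.pathGraph_adj]; decide)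
  · exact adj 1 2 (by rw [SimpleGraph.pathGraph_adj]; decide)
  · exact adj 2 3 (by rw [SimpleGraph.pathGraph_adj]; decide)
  · exact nadj 0 2 (by rw [SimpleGraph.pathGraph_adj]; decide)
  · exact nadj 1 3 (by rw [SimpleGraph.pathGraph_adj]; decide)
  · exact fun h => (by decide : (0 : Fin 4) ≠ 2) (f.injective h)
  · exact fun h => (by decide : (1 : Fin 4) ≠ 3) (f.injective h)

lemma no_c4 : ¬ Nonempty (cycleGraph 4 ↪g Gk k) := by
  rintro ⟨f⟩
  have adj : ∀ a b : Fin 4, (cycleGraph 4).Adj a b → (Gk k).Adj (f a) (f b) :=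
    fun a b h => f.map_adj_iff.mpr h
  have nadj : ∀ a b : Fin 4, ¬ (cycleGraph 4).Adj a b → ¬ (Gk k).Adj (f a) (f b) :=
    fun a b h ha => h (f.map_adj_iff.mp ha)
  refine no_induced_path (f 0) (f 1) (f 2) (f 3) ?_ ?_ ?_ ?_ ?_ ?_ ?_
  · exact adj 0 1 (by rw [SimpleGraph.cycleGraph_adj]; decide)
  · exact adj 1 2 (by rw [SimpleGraph.cycleGraph_adj]; decide)
  · exact adj 2 3 (by rw [SimpleGraph.cycleGraph_adj]; decide)
  · exact nadj 0 2 (by rw [SimpleGraph.cycleGraph_adj]; decide)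
  · exact nadj 1 3 (by rw [SimpleGraph.cycleGraph_adj]; decide)
  · exact fun h => (by decide : (0 : Fin 4) ≠ 2) (f.injective h)
  · exact fun h => (by decide : (1 : Fin 4) ≠ 3) (f.injective h)

lemma card_Vt : Fintype.card (Vt k) = 7 * k + 2 := by
  simp [Fintype.card_sum, Fintype.card_prod]
  ring

end Aux2
section Aux3
open Sum Finset
open scoped Classical
variable {k : ℕ}

/-- local distance within a copy of H -/
noncomputable def loc : Wt → Wt → ℚ :=
  fun x y => if x = y then 0 else if Hgraph.Adj x y then 1 else 2

lemma Dm_eq (u w : Vt k) :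
    distMatrix (Gk k) u w = if u = w then 0 else if (Gk k).Adj u w then 1 else 2 := by
  unfold distMatrix
  rw [dist_eq]
  split_ifs <;> norm_num

lemma D_inl_inl (a b : Fin 2) :
    distMatrix (Gk k) (inl a) (inl b) = if a = b then 0 else 1 := by
  rw [Dm_eq]
  by_cases h : a = b
  · simp [h]
  · rw [if_neg (by simp [h]), if_pos (adj_inl_inl.mpr h), if_neg h]

lemma D_inl_inr (a : Fin 2) (p : Fin k × Wt) :
    distMatrix (Gk k) (inl a) (inr p) = 1 := by
  rw [Dm_eq, if_neg (by simp), if_pos adj_inl_inr]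

lemma D_inr_inl (a : Fin 2) (p : Fin k × Wt) :
    distMatrix (Gk k) (inr p) (inl a) = 1 := by
  rw [Dm_eq, if_neg (by simp), if_pos adj_inr_inl]

lemma D_inr_inr (i j : Fin k) (x y : Wt) :
    distMatrix (Gk k) (inr (i, x)) (inr (j, y)) = if i = j then loc x y else 2 := by
  rw [Dm_eq]
  by_cases h : i = j
  · subst h
    rw [if_pos rfl, loc]
    by_cases hxy : x = y
    · simp [hxy]
    · rw [if_neg (by simp [hxy]), if_neg hxy]
      by_cases ha : Hgraph.Adj x y
      · rw [if_pos (adj_inr_iff.mpr ⟨rfl, ha⟩), if_pos ha]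
      · rw [if_neg (fun hadj => ha (adj_inr_iff.mp hadj).2), if_neg ha]
  · rw [if_neg h, if_neg (by simp [h]), if_neg (fun hadj => h (adj_inr_iff.mp hadj).1)]

/-- sum of v over copy i -/
noncomputable def Sv (v : Vt k → ℚ) (i : Fin k) : ℚ := ∑ w : Wt, v (inr (i, w))

/-- total sum of v over all copies -/
noncomputable def Tv (v : Vt k → ℚ) : ℚ := ∑ i : Fin k, Sv v i

lemma mulVec_eq_sum (v : Vt k → ℚ) (u : Vt k) :
    (distMatrix (Gk k)).mulVec v u = ∑ w : Vt k, distMatrix (Gk k) u w * v w := rfl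

lemma row_inl (v : Vt k → ℚ) (a : Fin 2) :
    (distMatrix (Gk k)).mulVec v (inl a) = v (inl 0) + v (inl 1) - v (inl a) + Tv v := by
  rw [mulVec_eq_sum, Fintype.sum_sum_type, Fintype.sum_prod_type]
  have h1 : ∑ b : Fin 2, distMatrix (Gk k) (inl a) (inl b) * v (inl b)
      = v (inl 0) + v (inl 1) - v (inl a) := by
    rw [Fin.sum_univ_two, D_inl_inl, D_inl_inl]
    fin_cases a <;> norm_num
  have h2 : ∀ j : Fin k, ∑ y : Wt, distMatrix (Gk k) (inl a) (inr (j, y)) * v (inr (j, y))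
      = Sv v j := by
    intro j
    rw [Sv]
    refine Finset.sum_congr rfl fun y _ => ?_
    rw [D_inl_inr, one_mul]
  rw [h1, Finset.sum_congr rfl (fun j _ => h2 j)]
  rfl

lemma row_inr (v : Vt k → ℚ) (i : Fin k) (x : Wt) :
    (distMatrix (Gk k)).mulVec v (inr (i, x)) =
      v (inl 0) + v (inl 1) + 2 * Tv v - 2 * Sv v i
        + ∑ y : Wt, loc x y * v (inr (i, y)) := by
  rw [mulVec_eq_sum, Fintype.sum_sum_type, Fintype.sum_prod_type]
  have h1 : ∑ b : Fin 2, distMatrix (Gk k) (inr (i, x)) (inl b) * v (inl b)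
      = v (inl 0) + v (inl 1) := by
    rw [Fin.sum_univ_two, D_inr_inl, D_inr_inl, one_mul, one_mul]
  have h2 : ∀ j : Fin k, ∑ y : Wt, distMatrix (Gk k) (inr (i, x)) (inr (j, y)) * v (inr (j, y))
      = 2 * Sv v j + (if i = j then (∑ y : Wt, loc x y * v (inr (i, y))) - 2 * Sv v i else 0) := by
    intro j
    by_cases h : i = j
    · subst h
      rw [if_pos rfl]
      have : ∀ y : Wt, distMatrix (Gk k) (inr (i, x)) (inr (i, y)) * v (inr (i, y))
          = loc x y * v (inr (i, y)) := by
        intro y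
        rw [D_inr_inr, if_pos rfl]
      rw [Finset.sum_congr rfl (fun y _ => this y)]
      ring
    · rw [if_neg h, add_zero]
      have : ∀ y : Wt, distMatrix (Gk k) (inr (i, x)) (inr (j, y)) * v (inr (j, y))
          = 2 * v (inr (j, y)) := by
        intro y
        rw [D_inr_inr, if_neg h]
      rw [Finset.sum_congr rfl (fun y _ => this y), Sv, Finset.mul_sum]
  rw [h1, Finset.sum_congr rfl (fun j _ => h2 j), Finset.sum_add_distrib,
    Finset.sum_ite_eq Finset.univ i
      (fun _ => (∑ y : Wt, loc x y * v (inr (i, y))) - 2 * Sv v i)]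
  simp only [Finset.mem_univ, if_pos]
  have hT : Tv v = ∑ j : Fin k, Sv v j := rfl
  rw [← Finset.mul_sum, ← hT]
  ring

end Aux3
section Aux4
open Sum Finset
open scoped Classical
variable {k : ℕ}

lemma loc_aa (a b : Fin 3) : loc (inl a) (inl b) = if a = b then 0 else 1 := by
  by_cases h : a = b
  · simp [loc, h]
  · rw [loc, if_neg (by simp [h]), if_pos (H_adj_inl_left (by simp [h])), if_neg h]

lemma loc_ab (a : Fin 3) (y : Fin 2 ⊕ Fin 2) : loc (inl a) (inr y) = 1 := by
  rw [loc, if_neg (by simp), if_pos (H_adj_inl_left (by simp))]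

lemma loc_ba (a : Fin 3) (y : Fin 2 ⊕ Fin 2) : loc (inr y) (inl a) = 1 := by
  rw [loc, if_neg (by simp), if_pos (H_adj_inl_right (by simp))]

lemma loc_bb (a b : Fin 2) : loc (inr (inl a)) (inr (inl b)) = if a = b then 0 else 1 := by
  by_cases h : a = b
  · simp [loc, h]
  · rw [loc, if_neg (by simp [h]), if_pos (show Hgraph.Adj (inr (inl a)) (inr (inl b)) from h),
      if_neg h]

lemma loc_cc (a b : Fin 2) : loc (inr (inr a)) (inr (inr b)) = if a = b then 0 else 1 := by
  by_cases h : a = b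
  · simp [loc, h]
  · rw [loc, if_neg (by simp [h]), if_pos (show Hgraph.Adj (inr (inr a)) (inr (inr b)) from h),
      if_neg h]

lemma loc_bc (a b : Fin 2) : loc (inr (inl a)) (inr (inr b)) = 2 := by
  rw [loc, if_neg (by simp),
    if_neg (show ¬ Hgraph.Adj (inr (inl a)) (inr (inr b)) from fun h => h)]

lemma loc_cb (a b : Fin 2) : loc (inr (inr a)) (inr (inl b)) = 2 := by
  rw [loc, if_neg (by simp),
    if_neg (show ¬ Hgraph.Adj (inr (inr a)) (inr (inl b)) from fun h => h)]

lemma locsum_a (v : Vt k → ℚ) (i : Fin k) (m : Fin 3) :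
    ∑ y : Wt, loc (inl m) y * v (inr (i, y)) = Sv v i - v (inr (i, inl m)) := by
  rw [Sv]
  rw [Fintype.sum_sum_type, Fintype.sum_sum_type, Fintype.sum_sum_type, Fintype.sum_sum_type]
  simp only [Fin.sum_univ_three, Fin.sum_univ_two, loc_aa, loc_ab]
  fin_cases m <;> simp [Fin.ext_iff] <;> ring

lemma locsum_b (v : Vt k → ℚ) (i : Fin k) (m : Fin 2) :
    ∑ y : Wt, loc (inr (inl m)) y * v (inr (i, y)) =
      Sv v i - v (inr (i, inr (inl m)))
        + v (inr (i, inr (inr 0))) + v (inr (i, inr (inr 1))) := by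
  rw [Sv]
  rw [Fintype.sum_sum_type, Fintype.sum_sum_type, Fintype.sum_sum_type, Fintype.sum_sum_type]
  simp only [Fin.sum_univ_three, Fin.sum_univ_two, loc_ba, loc_bb, loc_bc]
  fin_cases m <;> simp [Fin.ext_iff] <;> ring

lemma locsum_c (v : Vt k → ℚ) (i : Fin k) (m : Fin 2) :
    ∑ y : Wt, loc (inr (inr m)) y * v (inr (i, y)) =
      Sv v i - v (inr (i, inr (inr m)))
        + v (inr (i, inr (inl 0))) + v (inr (i, inr (inl 1))) := by
  rw [Sv]
  rw [Fintype.sum_sum_type, Fintype.sum_sum_type, Fintype.sum_sum_type, Fintype.sum_sum_type]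
  simp only [Fin.sum_univ_three, Fin.sum_univ_two, loc_ba, loc_cc, loc_cb]
  fin_cases m <;> simp [Fin.ext_iff] <;> ring

end Aux4
section Aux5
open Sum Finset
open scoped Classical
variable {k : ℕ}

/-- the kernel vectors -/
def fvec (k : ℕ) (i : Fin k) : Vt k → ℚ :=
  fun u => match u with
  | inl _ => -1
  | inr (j, inl _) => if j = i then -1 else 0
  | inr (j, inr _) => if j = i then 1 else 0

@[simp] lemma fvec_inl (i : Fin k) (a : Fin 2) : fvec k i (inl a) = -1 := rfl
@[simp] lemma fvec_a (i j : Fin k) (m : Fin 3) :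
    fvec k i (inr (j, inl m)) = if j = i then -1 else 0 := rfl
@[simp] lemma fvec_r (i j : Fin k) (x : Fin 2 ⊕ Fin 2) :
    fvec k i (inr (j, inr x)) = if j = i then 1 else 0 := rfl

lemma Sv_expand (v : Vt k → ℚ) (i : Fin k) :
    Sv v i = v (inr (i, inl 0)) + v (inr (i, inl 1)) + v (inr (i, inl 2))
      + v (inr (i, inr (inl 0))) + v (inr (i, inr (inl 1)))
      + v (inr (i, inr (inr 0))) + v (inr (i, inr (inr 1))) := by
  rw [Sv, Fintype.sum_sum_type, Fintype.sum_sum_type, Fin.sum_univ_three, Fin.sum_univ_two,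
    Fin.sum_univ_two]
  ring

lemma Sv_fvec (i j : Fin k) : Sv (fvec k i) j = if j = i then 1 else 0 := by
  rw [Sv_expand]
  by_cases h : j = i <;> norm_num [h]

lemma Tv_fvec (i : Fin k) : Tv (fvec k i) = 1 := by
  rw [Tv]
  rw [Finset.sum_congr rfl (fun j _ => Sv_fvec i j)]
  rw [Finset.sum_ite_eq' Finset.univ i (fun _ => (1 : ℚ))]
  simp

lemma fvec_ker (i : Fin k) : (distMatrix (Gk k)).mulVec (fvec k i) = 0 := by
  funext u
  cases u with
  | inl a =>
      rw [row_inl, Tv_fvec]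
      simp
  | inr p =>
      obtain ⟨j, x⟩ := p
      rw [row_inr, Tv_fvec, Sv_fvec]
      rcases x with m | m | m
      · rw [locsum_a, Sv_fvec]
        by_cases h : j = i <;> norm_num [h]
      · rw [locsum_b, Sv_fvec]
        by_cases h : j = i <;> norm_num [h]
      · rw [locsum_c, Sv_fvec]
        by_cases h : j = i <;> norm_num [h]

lemma ker_eq_span :
    LinearMap.ker (distMatrix (Gk k)).mulVecLin = Submodule.span ℚ (Set.range (fvec k)) := by
  apply le_antisymm
  · intro v hvk
    rw [LinearMap.mem_ker, Matrix.mulVecLin_apply] at hvk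
    -- extract equations
    have hv : ∀ u : Vt k, (distMatrix (Gk k)).mulVec v u = 0 := fun u => congrFun hvk u
    have main : ∀ i : Fin k,
        (∀ m : Fin 3, v (inr (i, inl m)) = -(v (inr (i, inr (inl 0))))) ∧
        (∀ m : Fin 2, v (inr (i, inr (inl m))) = v (inr (i, inr (inl 0)))) ∧
        (∀ m : Fin 2, v (inr (i, inr (inr m))) = v (inr (i, inr (inl 0)))) ∧
        Sv v i = v (inr (i, inr (inl 0))) := by
      intro i
      have hA : ∀ m : Fin 3, v (inl 0) + v (inl 1) + 2 * Tv v - 2 * Sv v i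
          + (Sv v i - v (inr (i, inl m))) = 0 := by
        intro m
        have := hv (inr (i, inl m))
        rw [row_inr, locsum_a] at this
        exact this
      have hB : ∀ m : Fin 2, v (inl 0) + v (inl 1) + 2 * Tv v - 2 * Sv v i
          + (Sv v i - v (inr (i, inr (inl m)))
            + v (inr (i, inr (inr 0))) + v (inr (i, inr (inr 1)))) = 0 := by
        intro m
        have := hv (inr (i, inr (inl m)))
        rw [row_inr, locsum_b] at this
        exact this
      have hC : ∀ m : Fin 2, v (inl 0) + v (inl 1) + 2 * Tv v - 2 * Sv v i
          + (Sv v i - v (inr (i, inr (inr m)))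
            + v (inr (i, inr (inl 0))) + v (inr (i, inr (inl 1)))) = 0 := by
        intro m
        have := hv (inr (i, inr (inr m)))
        rw [row_inr, locsum_c] at this
        exact this
      have hSv := Sv_expand v i
      have f1 := hB 0; have f2 := hB 1
      have g1 := hC 0; have g2 := hC 1
      refine ⟨fun m => ?_, fun m => ?_, fun m => ?_, ?_⟩
      · linarith [hA m]
      · linarith [hB m]
      · linarith [hC m]
      · linarith [hA 0, hA 1, hA 2]
    have hT : Tv v = ∑ i : Fin k, v (inr (i, inr (inl 0))) := by
      rw [Tv]
      exact Finset.sum_congr rfl (fun i _ => (main i).2.2.2)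
    have hhub : ∀ a : Fin 2, v (inl a) = -(Tv v) := by
      have h0 := hv (inl 0); rw [row_inl] at h0
      have h1 := hv (inl 1); rw [row_inl] at h1
      intro a
      have ha := hv (inl a); rw [row_inl] at ha
      linarith
    have hrep : v = ∑ i : Fin k, v (inr (i, inr (inl 0))) • fvec k i := by
      funext u
      rw [Finset.sum_apply]
      simp only [Pi.smul_apply, smul_eq_mul]
      cases u with
      | inl a =>
          rw [hhub a, hT]
          simp only [fvec_inl]
          rw [← Finset.sum_neg_distrib]
          exact Finset.sum_congr rfl (fun i _ => by ring)
      | inr p =>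
          obtain ⟨j, x⟩ := p
          rcases x with m | m | m
          · simp only [fvec_a, mul_ite, mul_neg_one, mul_zero]
            rw [Finset.sum_ite_eq Finset.univ j (fun i => -(v (inr (i, inr (inl 0)))))]
            simp only [Finset.mem_univ, if_pos]
            exact ((main j).1 m)
          · simp only [fvec_r, mul_ite, mul_one, mul_zero]
            rw [Finset.sum_ite_eq Finset.univ j (fun i => v (inr (i, inr (inl 0))))]
            simp only [Finset.mem_univ, if_pos]
            exact ((main j).2.1 m)
          · simp only [fvec_r, mul_ite, mul_one, mul_zero]
            rw [Finset.sum_ite_eq Finset.univ j (fun i => v (inr (i, inr (inl 0))))]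
            simp only [Finset.mem_univ, if_pos]
            exact ((main j).2.2.1 m)
    rw [hrep]
    exact Submodule.sum_mem _ (fun i _ =>
      Submodule.smul_mem _ _ (Submodule.subset_span ⟨i, rfl⟩))
  · rw [Submodule.span_le]
    rintro _ ⟨i, rfl⟩
    rw [SetLike.mem_coe, LinearMap.mem_ker, Matrix.mulVecLin_apply]
    exact fvec_ker i

lemma fvec_linearIndependent : LinearIndependent ℚ (fvec k) := by
  rw [Fintype.linearIndependent_iff]
  intro g hg i
  have := congrFun hg (inr (i, inr (inl 0)))
  rw [Finset.sum_apply] at this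
  simp only [Pi.smul_apply, smul_eq_mul, fvec_r, mul_ite, mul_one, mul_zero, Pi.zero_apply] at this
  rwa [Finset.sum_ite_eq Finset.univ i (fun j => g j), if_pos (Finset.mem_univ i)] at this

lemma rank_eq : (distMatrix (Gk k)).rank + k = 7 * k + 2 := by
  have h1 := LinearMap.finrank_range_add_finrank_ker (distMatrix (Gk k)).mulVecLin
  rw [Module.finrank_fintype_fun_eq_card, card_Vt] at h1
  have h2 : Module.finrank ℚ (LinearMap.ker (distMatrix (Gk k)).mulVecLin) = k := by
    rw [ker_eq_span, finrank_span_eq_card fvec_linearIndependent, Fintype.card_fin]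
  rw [Matrix.rank]
  omega

end Aux5
/-- For every integer k ≥ 2, the connected trivially perfect graph
G = K₂ ∨ (H + H + ⋯ + H) (join of K₂ with k disjoint copies of H = K₃ ∨ (K₂ + K₂))
has 7k + 2 vertices and its distance matrix has nullity exactly k. -/
theorem join_copies_nullity (k : ℕ) (hk : 2 ≤ k) :
    (gJoin (⊤ : SimpleGraph (Fin 2)) (copies k Hgraph)).Connected ∧
    (¬ Nonempty (pathGraph 4 ↪g gJoin (⊤ : SimpleGraph (Fin 2)) (copies k Hgraph))) ∧
    (¬ Nonempty (cycleGraph 4 ↪g gJoin (⊤ : SimpleGraph (Fin 2)) (copies k Hgraph))) ∧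
    Fintype.card (Fin 2 ⊕ (Fin k × (Fin 3 ⊕ (Fin 2 ⊕ Fin 2)))) = 7 * k + 2 ∧
    Fintype.card (Fin 2 ⊕ (Fin k × (Fin 3 ⊕ (Fin 2 ⊕ Fin 2)))) -
      (distMatrix (gJoin (⊤ : SimpleGraph (Fin 2)) (copies k Hgraph))).rank = k := by
  refine ⟨Gk_connected, no_p4, no_c4, card_Vt, ?_⟩
  have h1 : (distMatrix (gJoin (⊤ : SimpleGraph (Fin 2)) (copies k Hgraph))).rank + k = 7 * k + 2 := rank_eq
  have h2 := card_Vt (k := k)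
  rw [show Fintype.card (Fin 2 ⊕ (Fin k × (Fin 3 ⊕ (Fin 2 ⊕ Fin 2)))) = 7 * k + 2 from h2]
  omega
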